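/- (Ping-pong lemma with amalgamation) Let H and Z be subgroups of a group G acting on a set Ω, with the index [Z : H∩Z] > 2. Suppose Ω_H and Ω_Z are disjoint nonempty subsets of Ω such that h·Ω_H ⊆ Ω_Z for every h ∈ H − Z, and z·Ω_Z ⊆ Ω_H for every z ∈ Z − H. Then the subgroup generated by H and Z is isomorphic to the amalgamated free product H *_{H∩Z} Z. -/

import Mathlib

open Monoid

section PingPong

variable {G : Type*} [Group G] (H Z : Subgroup G)

/-- The two-element family of groups `H`, `Z`. -/
def pingPongFam : Bool → Type _ := fun b => cond b H Z

instance : ∀ b, Group (pingPongFam H Z b) := fun b => by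
  cases b <;> (dsimp [pingPongFam]; infer_instance)

/-- The inclusions of `H ⊓ Z` into `H` and `Z`. -/
def pingPongIncl : ∀ b : Bool, ↥(H ⊓ Z) →* pingPongFam H Z b := fun b =>
  match b with
  | true => Subgroup.inclusion inf_le_left
  | false => Subgroup.inclusion inf_le_right

/-- The amalgamated free product `H *_{H ⊓ Z} Z`, as a pushout of groups. -/
def AmalgamatedProduct : Type _ := PushoutI (pingPongIncl H Z)

noncomputable instance : Group (AmalgamatedProduct H Z) := by
  unfold AmalgamatedProduct; infer_instance

/-- The canonical homomorphism `H *_{H ⊓ Z} Z → G` induced by the inclusions of `H`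
and `Z` into `G`. -/
def amalgamCanonicalHom : AmalgamatedProduct H Z →* G :=
  PushoutI.lift
    (fun b => match b with
      | true => (H.subtype : ↥H →* G)
      | false => (Z.subtype : ↥Z →* G))
    ((H ⊓ Z).subtype)
    (by intro b; cases b <;> rfl)


/-! ### Auxiliary definitions and lemmas for the ping-pong argument -/

/-- The canonical value of an element of the family in `G`. -/
private def ppVal (H Z : Subgroup G) : ∀ b, pingPongFam H Z b →* G := fun b =>
  match b with
  | true => H.subtype
  | false => Z.subtype

section PingPongAux

variable {G₀ : Type*} [Group G₀] {H₀ Z₀ : Subgroup G₀} {Ω : Type*} [MulAction G₀ Ω]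
  {ΩH ΩZ : Set Ω}

/-- The source set for letters of each type. -/
private def ppSrc (ΩH ΩZ : Set Ω) : Bool → Set Ω := fun b => cond b ΩH ΩZ

/-- A valid letter of type `b` : in `H − Z` if `b`, in `Z − H` otherwise. -/
private def ppLetter (H₀ Z₀ : Subgroup G₀) (p : Bool × G₀) : Prop :=
  cond p.1 (p.2 ∈ H₀ ∧ p.2 ∉ Z₀) (p.2 ∈ Z₀ ∧ p.2 ∉ H₀)

private lemma ppSrc_disjoint (hdisj : Disjoint ΩH ΩZ) (b : Bool) :
    Disjoint (ppSrc ΩH ΩZ b) (ppSrc ΩH ΩZ (!b)) := by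
  cases b
  · exact hdisj.symm
  · exact hdisj

private lemma ppSrc_nonempty (hHne : ΩH.Nonempty) (hZne : ΩZ.Nonempty) (b : Bool) :
    (ppSrc ΩH ΩZ b).Nonempty := by cases b <;> assumption

private lemma ppLetter_smul
    (hH : ∀ h : G₀, h ∈ H₀ → h ∉ Z₀ → ∀ x ∈ ΩH, h • x ∈ ΩZ)
    (hZ : ∀ z : G₀, z ∈ Z₀ → z ∉ H₀ → ∀ x ∈ ΩZ, z • x ∈ ΩH)
    {p : Bool × G₀} (hp : ppLetter H₀ Z₀ p) {x : Ω}
    (hx : x ∈ ppSrc ΩH ΩZ p.1) : p.2 • x ∈ ppSrc ΩH ΩZ (!p.1) := by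
  obtain ⟨b, g⟩ := p
  cases b
  · exact hZ g hp.1 hp.2 x hx
  · exact hH g hp.1 hp.2 x hx

private lemma ppLetter_inv {p : Bool × G₀} (hp : ppLetter H₀ Z₀ p) :
    ppLetter H₀ Z₀ (p.1, p.2⁻¹) := by
  obtain ⟨b, g⟩ := p
  cases b
  · exact ⟨inv_mem hp.1, fun h => hp.2 (by simpa using inv_mem h)⟩
  · exact ⟨inv_mem hp.1, fun h => hp.2 (by simpa using inv_mem h)⟩

private lemma pp_getLast?_cons {α : Type*} (p : α) {l : List α} (h : l ≠ []) :
    (p :: l).getLast? = l.getLast? := by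
  cases l with
  | nil => exact absurd rfl h
  | cons q t => exact List.getLast?_cons_cons

private lemma pp_head?_append {α : Type*} {l : List α} (l₂ : List α) (h : l ≠ []) :
    (l ++ l₂).head? = l.head? := by
  cases l with
  | nil => exact absurd rfl h
  | cons q t => rfl

/-- Key ping-pong computation: an alternating word ending (rightmost) in a letter of type
`b₁` sends `ppSrc b₁` into `ppSrc (!b₀)` where `b₀` is the type of the first letter. -/
private lemma pp_smul
    (hH : ∀ h : G₀, h ∈ H₀ → h ∉ Z₀ → ∀ x ∈ ΩH, h • x ∈ ΩZ)
    (hZ : ∀ z : G₀, z ∈ Z₀ → z ∉ H₀ → ∀ x ∈ ΩZ, z • x ∈ ΩH) :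
    ∀ (l : List (Bool × G₀)) (p : Bool × G₀) (b₁ : Bool),
      (p :: l).Chain' (fun a b => a.1 ≠ b.1) →
      (∀ q ∈ p :: l, ppLetter H₀ Z₀ q) →
      ((p :: l).getLast?.map Prod.fst) = some b₁ →
      ∀ x ∈ ppSrc ΩH ΩZ b₁,
        (((p :: l).map Prod.snd).prod) • x ∈ ppSrc ΩH ΩZ (!p.1) := by
  intro l
  induction l with
  | nil =>
    intro p b₁ _ hmem hlast x hx
    simp only [List.getLast?_singleton, Option.map_some] at hlast
    obtain rfl : p.1 = b₁ := by injection hlast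
    simpa using ppLetter_smul hH hZ (hmem p (by simp)) hx
  | cons q t ih =>
    intro p b₁ hchain hmem hlast x hx
    have hchain' : (q :: t).Chain' (fun a b => a.1 ≠ b.1) := hchain.tail
    have hlast' : ((q :: t).getLast?.map Prod.fst) = some b₁ := by
      rwa [List.getLast?_cons_cons] at hlast
    have hqt := ih q b₁ hchain' (fun r hr => hmem r (List.mem_cons_of_mem _ hr)) hlast' x hx
    have hne : p.1 ≠ q.1 := (List.isChain_cons_cons.1 hchain).1
    have hq1 : (!q.1) = p.1 := by
      cases hp : p.1 <;> cases hq : q.1 <;> simp_all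
    rw [hq1] at hqt
    have := ppLetter_smul hH hZ (hmem p (by simp)) hqt
    simpa [mul_smul, mul_assoc] using this

/-- The "pure" case of ping-pong: a nonempty alternating word whose first and last letters
have the same type has product `≠ 1`. -/
private lemma pp_ne_one_pure (hdisj : Disjoint ΩH ΩZ)
    (hHne : ΩH.Nonempty) (hZne : ΩZ.Nonempty)
    (hH : ∀ h : G₀, h ∈ H₀ → h ∉ Z₀ → ∀ x ∈ ΩH, h • x ∈ ΩZ)
    (hZ : ∀ z : G₀, z ∈ Z₀ → z ∉ H₀ → ∀ x ∈ ΩZ, z • x ∈ ΩH)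
    (l : List (Bool × G₀)) (p : Bool × G₀)
    (hchain : (p :: l).Chain' (fun a b => a.1 ≠ b.1))
    (hmem : ∀ q ∈ p :: l, ppLetter H₀ Z₀ q)
    (hlast : ((p :: l).getLast?.map Prod.fst) = some p.1) :
    (((p :: l).map Prod.snd).prod) ≠ 1 := by
  obtain ⟨x, hx⟩ := ppSrc_nonempty hHne hZne p.1
  have hmoved := pp_smul hH hZ l p p.1 hchain hmem hlast x hx
  intro h1
  rw [h1, one_smul] at hmoved
  exact (ppSrc_disjoint hdisj p.1).ne_of_mem hx hmoved rfl

/-- Existence of an element of `Z` avoiding two left cosets of `H ⊓ Z`, when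
`[Z : H ⊓ Z] > 2` or is infinite. -/
private lemma pp_exists_avoid (hindex : 2 < H₀.relIndex Z₀ ∨ H₀.relIndex Z₀ = 0)
    (a b : G₀) (ha : a ∈ Z₀) (hb : b ∈ Z₀) :
    ∃ t ∈ Z₀, a⁻¹ * t ∉ H₀ ∧ b⁻¹ * t ∉ H₀ := by
  set K : Subgroup Z₀ := H₀.subgroupOf Z₀ with hK
  have hcard : 2 < Nat.card (Z₀ ⧸ K) ∨ Nat.card (Z₀ ⧸ K) = 0 := hindex
  have key : ∃ c : Z₀ ⧸ K, c ≠ ((⟨a, ha⟩ : Z₀) : Z₀ ⧸ K) ∧ c ≠ ((⟨b, hb⟩ : Z₀) : Z₀ ⧸ K) := by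
    by_contra hcon
    push_neg at hcon
    have hsub : (Set.univ : Set (Z₀ ⧸ K)) ⊆
        {((⟨a, ha⟩ : Z₀) : Z₀ ⧸ K), ((⟨b, hb⟩ : Z₀) : Z₀ ⧸ K)} := by
      intro c _
      by_cases h : c = ((⟨a, ha⟩ : Z₀) : Z₀ ⧸ K)
      · exact Or.inl h
      · exact Or.inr (hcon c h)
    have hfin : Finite (Z₀ ⧸ K) :=
      Set.finite_univ_iff.mp (Set.Finite.subset ((Set.finite_singleton _).insert _) hsub)
    have hle2 : Nat.card (Z₀ ⧸ K) ≤ 2 := by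
      have h1 : Nat.card (Z₀ ⧸ K) = (Set.univ : Set (Z₀ ⧸ K)).ncard := (Set.ncard_univ _).symm
      have h2 := Set.ncard_le_ncard hsub ((Set.finite_singleton _).insert _)
      have h3 : ({((⟨a, ha⟩ : Z₀) : Z₀ ⧸ K), ((⟨b, hb⟩ : Z₀) : Z₀ ⧸ K)} : Set (Z₀ ⧸ K)).ncard
          ≤ 2 := by
        refine le_trans (Set.ncard_insert_le _ _) ?_
        simp
      omega
    have hpos : 0 < Nat.card (Z₀ ⧸ K) := Nat.card_pos
    omega
  obtain ⟨c, hca, hcb⟩ := key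
  obtain ⟨t, rfl⟩ := QuotientGroup.mk_surjective c
  refine ⟨(t : G₀), t.2, ?_, ?_⟩
  · intro hmem
    apply hca
    symm
    rw [QuotientGroup.eq]
    rw [hK, Subgroup.mem_subgroupOf]
    exact hmem
  · intro hmem
    apply hcb
    symm
    rw [QuotientGroup.eq]
    rw [hK, Subgroup.mem_subgroupOf]
    exact hmem

/-- Mixed case: word starts (left) with a `Z`-letter and ends with an `H`-letter. -/
private lemma pp_ne_one_ft
    (pure_case : ∀ (l : List (Bool × G₀)) (p : Bool × G₀),
      (p :: l).Chain' (fun a b => a.1 ≠ b.1) →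
      (∀ q ∈ p :: l, ppLetter H₀ Z₀ q) →
      ((p :: l).getLast?.map Prod.fst) = some p.1 →
      (((p :: l).map Prod.snd).prod) ≠ 1)
    (avoid : ∀ a b : G₀, a ∈ Z₀ → b ∈ Z₀ → ∃ t ∈ Z₀, a⁻¹ * t ∉ H₀ ∧ b⁻¹ * t ∉ H₀)
    (z : G₀) (l : List (Bool × G₀))
    (hchain : ((false, z) :: l).Chain' (fun a b => a.1 ≠ b.1))
    (hmem : ∀ q ∈ (false, z) :: l, ppLetter H₀ Z₀ q)
    (hlast : (((false, z) :: l).getLast?.map Prod.fst) = some true) :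
    ((((false, z) :: l).map Prod.snd).prod) ≠ 1 := by
  have hzZ : z ∈ Z₀ := (hmem (false, z) (by simp)).1
  obtain ⟨t, htZ, ht1, htz⟩ := avoid 1 z (one_mem _) hzZ
  rw [inv_one, one_mul] at ht1
  set l' : List (Bool × G₀) := (false, t⁻¹ * z) :: (l ++ [(false, t)]) with hl'
  have hlne : l ≠ [] := by
    rintro rfl
    rw [List.getLast?_singleton, Option.map_some] at hlast
    exact Bool.noConfusion (Option.some.inj hlast)
  have hheadl : ∀ q ∈ l.head?, q.1 = true := by
    intro q hq
    cases l with
    | nil => simp at hq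
    | cons r s =>
      simp only [List.head?_cons, Option.mem_def, Option.some.injEq] at hq
      subst hq
      have h4 := (List.isChain_cons_cons.1 hchain).1
      cases hr : r.1 with
      | false => exact absurd hr.symm h4
      | true => rfl
  have hchain' : l'.Chain' (fun a b => a.1 ≠ b.1) := by
    rw [hl']; show List.IsChain _ _; rw [List.isChain_cons]
    constructor
    · intro q hq
      rw [pp_head?_append _ hlne] at hq
      have h2 := hheadl q hq
      exact fun h => by rw [h2] at h; exact Bool.noConfusion h
    · rw [List.isChain_append]
      refine ⟨hchain.tail, by simp, ?_⟩
      intro x hx y hy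
      simp only [List.head?_cons, Option.mem_def, Option.some.injEq] at hy
      subst hy
      have : (Option.map Prod.fst l.getLast?) = some true := by
        rwa [pp_getLast?_cons _ hlne] at hlast
      rw [hx] at this
      simp only [Option.map_some] at this
      have h3 : x.1 = true := by injection this
      exact fun h => by rw [h3] at h; exact Bool.noConfusion h
  have hmem' : ∀ q ∈ l', ppLetter H₀ Z₀ q := by
    intro q hq
    rw [hl'] at hq
    rcases List.mem_cons.1 hq with rfl | hq
    · refine ⟨mul_mem (inv_mem htZ) hzZ, fun hmm => htz ?_⟩
      have : (t⁻¹ * z)⁻¹ ∈ H₀ := inv_mem hmm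
      simpa [mul_inv_rev] using this
    · rcases List.mem_append.1 hq with hq | hq
      · exact hmem q (List.mem_cons_of_mem _ hq)
      · simp only [List.mem_singleton] at hq
        subst hq
        exact ⟨htZ, ht1⟩
  have hlast' : (l'.getLast?.map Prod.fst) = some false := by
    rw [hl', pp_getLast?_cons _ (by simp), List.getLast?_concat]
    rfl
  have := pure_case (l ++ [(false, t)]) (false, t⁻¹ * z) hchain' hmem' hlast'
  intro h1
  apply this
  have hexp : (l'.map Prod.snd).prod
      = t⁻¹ * ((((false, z) :: l).map Prod.snd).prod) * t := by
    simp only [hl', List.map_cons, List.map_append, List.prod_cons, List.prod_append,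
      List.map_cons, List.map_nil, List.prod_cons, List.prod_nil, mul_one]
    group
  rw [hexp, h1]
  group

/-- Main ping-pong lemma in `G₀`: a nonempty alternating word has product `≠ 1`. -/
private lemma pp_ne_one
    (hindex : 2 < H₀.relIndex Z₀ ∨ H₀.relIndex Z₀ = 0)
    (hdisj : Disjoint ΩH ΩZ) (hHne : ΩH.Nonempty) (hZne : ΩZ.Nonempty)
    (hH : ∀ h : G₀, h ∈ H₀ → h ∉ Z₀ → ∀ x ∈ ΩH, h • x ∈ ΩZ)
    (hZ : ∀ z : G₀, z ∈ Z₀ → z ∉ H₀ → ∀ x ∈ ΩZ, z • x ∈ ΩH)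
    (l : List (Bool × G₀)) (p : Bool × G₀)
    (hchain : (p :: l).Chain' (fun a b => a.1 ≠ b.1))
    (hmem : ∀ q ∈ p :: l, ppLetter H₀ Z₀ q) :
    (((p :: l).map Prod.snd).prod) ≠ 1 := by
  have pure_case := pp_ne_one_pure hdisj hHne hZne hH hZ
  have ft_case := pp_ne_one_ft pure_case (pp_exists_avoid hindex)
  obtain ⟨q, hq⟩ : ∃ q, (p :: l).getLast? = some q :=
    ⟨(p :: l).getLast (List.cons_ne_nil _ _), List.getLast?_eq_getLast _⟩
  by_cases hsame : q.1 = p.1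
  · exact pure_case l p hchain hmem (by rw [hq, Option.map_some, hsame])
  · cases hp : p.1 with
    | false =>
      have hq1 : q.1 = true := by
        cases hqb : q.1
        · rw [hp] at hsame; exact absurd hqb hsame
        · rfl
      obtain ⟨b, g⟩ := p
      simp only at hp
      subst hp
      exact ft_case g l hchain hmem (by rw [hq, Option.map_some, hq1])
    | true =>
      have hq1 : q.1 = false := by
        cases hqb : q.1
        · rfl
        · rw [hp] at hsame; exact absurd hqb hsame
      set f : Bool × G₀ → Bool × G₀ := fun r => (r.1, r.2⁻¹) with hf
      set rev : List (Bool × G₀) := ((p :: l).map f).reverse with hrev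
      have hrevchain : rev.Chain' (fun a b => a.1 ≠ b.1) := by
        rw [hrev]; show List.IsChain _ _; rw [List.isChain_reverse]
        have hc2 : List.Chain' (fun a b : Bool × G₀ => b.1 ≠ a.1) (p :: l) :=
          hchain.imp (fun _ _ h h2 => h h2.symm)
        exact List.isChain_map_of_isChain f (fun a b h => h) hc2
      have hrevmem : ∀ r ∈ rev, ppLetter H₀ Z₀ r := by
        intro r hr
        rw [hrev, List.mem_reverse, List.mem_map] at hr
        obtain ⟨s, hs, rfl⟩ := hr
        exact ppLetter_inv (hmem s hs)
      have hrevhead : rev.head? = some (f q) := by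
        rw [hrev, List.head?_reverse, List.getLast?_map, hq, Option.map_some]
      have hrevlast : rev.getLast?.map Prod.fst = some true := by
        rw [hrev, List.getLast?_reverse, List.head?_map, List.head?_cons, Option.map_some,
          Option.map_some, hp]
      obtain ⟨r, rest, hcons⟩ : ∃ r rest, rev = r :: rest := by
        cases hrevc : rev with
        | nil => rw [hrevc] at hrevhead; exact absurd hrevhead (by simp)
        | cons r rest => exact ⟨r, rest, rfl⟩
      have hr1 : r = (false, q.2⁻¹) := by
        rw [hcons] at hrevhead
        simp only [List.head?_cons, Option.some.injEq] at hrevhead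
        rw [hrevhead, hf]
        exact Prod.ext hq1 rfl
      have hprodrev : ((rev.map Prod.snd).prod) = (((p :: l).map Prod.snd).prod)⁻¹ := by
        have hmm : rev.map Prod.snd
            = (((p :: l).map Prod.snd).map (fun x => x⁻¹)).reverse := by
          rw [hrev, List.map_reverse, List.map_map, List.map_map]
          rfl
        rw [hmm]
        exact (List.prod_inv_reverse _).symm
      intro h1
      have h2 : (((r :: rest).map Prod.snd).prod) = 1 := by
        rw [← hcons, hprodrev, h1, inv_one]
      rw [hcons] at hrevchain hrevmem
      rw [hr1] at h2 hrevchain hrevmem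
      refine ft_case q.2⁻¹ rest hrevchain hrevmem ?_ h2
      rw [← hr1, ← hcons]
      exact hrevlast

/-- A nontrivial element of a transversal set is not in the range of the base map. -/
private lemma pp_transversal_eq_one {ι : Type*} {Gf : ι → Type*} [∀ i, Group (Gf i)]
    {Hb : Type*} [Group Hb] {φ : ∀ i, Hb →* Gf i}
    (d : PushoutI.NormalWord.Transversal φ) {i : ι} {g : Gf i}
    (hset : g ∈ d.set i) (hrange : g ∈ (φ i).range) : g = 1 := by
  have hinj := (d.compl i).1
  have := hinj (a₁ := ⟨⟨g, hrange⟩, ⟨1, d.one_mem i⟩⟩)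
    (a₂ := ⟨⟨1, Subgroup.one_mem _⟩, ⟨g, hset⟩⟩) (by simp)
  exact congrArg (fun p => (p.1 : Gf i)) this

end PingPongAux

/-- Ping-pong with amalgamation: if `[Z : H ⊓ Z] > 2` (possibly
infinite), and `Ω_H, Ω_Z` are disjoint nonempty subsets of an action set `Ω` with
`(H − Z) Ω_H ⊆ Ω_Z` and `(Z − H) Ω_Z ⊆ Ω_H`, then the canonical homomorphism from the
amalgamated free product `H *_{H ⊓ Z} Z` to `G` is injective with image `⟨H, Z⟩`. -/
theorem ping_pong_amalgam
    {Ω : Type*} [MulAction G Ω]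
    (hindex : 2 < H.relIndex Z ∨ H.relIndex Z = 0)
    (ΩH ΩZ : Set Ω) (hdisj : Disjoint ΩH ΩZ) (hHne : ΩH.Nonempty) (hZne : ΩZ.Nonempty)
    (hH : ∀ h : G, h ∈ H → h ∉ Z → ∀ x ∈ ΩH, h • x ∈ ΩZ)
    (hZ : ∀ z : G, z ∈ Z → z ∉ H → ∀ x ∈ ΩZ, z • x ∈ ΩH) :
    Function.Injective (amalgamCanonicalHom H Z) ∧
      (amalgamCanonicalHom H Z).range = H ⊔ Z := by
  classical
  have hinj : ∀ b, Function.Injective (pingPongIncl H Z b) := by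
    intro b
    cases b
    · exact fun a b h => Subgroup.inclusion_injective inf_le_right h
    · exact fun a b h => Subgroup.inclusion_injective inf_le_left h
  have hcan_of : ∀ (b) (g : pingPongFam H Z b),
      amalgamCanonicalHom H Z (Monoid.PushoutI.of b g) = ppVal H Z b g := by
    intro b g
    cases b
    · exact Monoid.PushoutI.lift_of _ _ _ _
    · exact Monoid.PushoutI.lift_of _ _ _ _
  have hcan_base : ∀ g : ↥(H ⊓ Z),
      amalgamCanonicalHom H Z (Monoid.PushoutI.base (pingPongIncl H Z) g) = (g : G) :=
    fun g => Monoid.PushoutI.lift_base _ _ _ g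
  constructor
  · -- injectivity
    rw [injective_iff_map_eq_one]
    intro x hx
    obtain ⟨d⟩ := Monoid.PushoutI.NormalWord.transversal_nonempty (pingPongIncl H Z) hinj
    haveI h1 : ∀ b : Bool, DecidableEq (pingPongFam H Z b) :=
      fun b => Classical.decEq (pingPongFam H Z b)
    let x' : Monoid.PushoutI (pingPongIncl H Z) := x
    set E := @Monoid.PushoutI.NormalWord.equiv Bool (pingPongFam H Z) _ _ _ (pingPongIncl H Z) d
      instDecidableEqBool h1 with hE
    set w : Monoid.PushoutI.NormalWord d := E x' with hw
    have hxw : w.prod = x' := E.left_inv x'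
    -- value of the image of `x` in `G`
    have himg : (w.head : G) * ((w.toList.map (fun p => ppVal H Z p.1 p.2)).prod) = 1 := by
      have h1 : amalgamCanonicalHom H Z w.prod
          = (w.head : G) * ((w.toList.map (fun p => ppVal H Z p.1 p.2)).prod) := by
        rw [Monoid.PushoutI.NormalWord.prod]; erw [map_mul]; rw [hcan_base]
        congr 1
        rw [Monoid.CoprodI.Word.prod]
        erw [map_list_prod, map_list_prod, List.map_map, List.map_map]
        congr 1
      rw [← h1, hxw]
      exact hx
    -- each letter of the word gives a valid ping-pong letter
    have hletter : ∀ q ∈ w.toList, ppLetter H Z (q.1, ppVal H Z q.1 q.2) := by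
      intro q hq
      have hset : q.2 ∈ d.set q.1 := w.normalized q.1 q.2 hq
      have hne1 : q.2 ≠ 1 := w.ne_one q hq
      obtain ⟨b, g⟩ := q
      cases b
      · -- Z-letter
        refine ⟨g.2, fun hgH => hne1 ?_⟩
        refine pp_transversal_eq_one d hset ?_
        change @Membership.mem (↥Z) (Subgroup ↥Z) _ (Subgroup.inclusion (inf_le_right : H ⊓ Z ≤ Z)).range g
        rw [Subgroup.inclusion_range]; erw [Subgroup.mem_subgroupOf]
        exact ⟨hgH, g.2⟩
      · -- H-letter
        refine ⟨g.2, fun hgZ => hne1 ?_⟩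
        refine pp_transversal_eq_one d hset ?_
        change @Membership.mem (↥H) (Subgroup ↥H) _ (Subgroup.inclusion (inf_le_left : H ⊓ Z ≤ H)).range g
        rw [Subgroup.inclusion_range]; erw [Subgroup.mem_subgroupOf]
        exact ⟨g.2, hgZ⟩
    -- case on whether the word is empty
    cases hlist : w.toList with
    | nil =>
      have hhead : (w.head : G) = 1 := by
        have := himg
        rw [hlist] at this
        simpa using this
      have hhead1 : w.head = 1 := Subtype.ext hhead
      have : x' = 1 := by
        rw [← hxw, Monoid.PushoutI.NormalWord.prod, hhead1, map_one, one_mul,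
          Monoid.CoprodI.Word.prod, hlist]
        simp
      exact this
    | cons p rest =>
      exfalso
      -- absorb the head into the first letter
      set lG : List (Bool × G) :=
        (p.1, (w.head : G) * ppVal H Z p.1 p.2) :: rest.map (fun q => (q.1, ppVal H Z q.1 q.2))
        with hlG
      have hch := w.chain_ne
      rw [hlist] at hch
      obtain ⟨hch1, hch2⟩ := List.isChain_cons.1 hch
      have hchainG : lG.Chain' (fun a b => a.1 ≠ b.1) := by
        rw [hlG]; show List.IsChain _ _; rw [List.isChain_cons]
        constructor
        · intro y hy
          rw [List.head?_map] at hy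
          obtain ⟨y', hy', rfl⟩ := Option.map_eq_some_iff.1 (Option.mem_def.1 hy)
          exact hch1 y' hy'
        · exact List.isChain_map_of_isChain
            (fun q : (i : Bool) × pingPongFam H Z i => (q.1, ppVal H Z q.1 q.2))
            (fun a b h => h) hch2
      have hmemG : ∀ q ∈ lG, ppLetter H Z q := by
        intro q hq
        rw [hlG] at hq
        rcases List.mem_cons.1 hq with rfl | hq
        · -- head letter, with w.head absorbed
          have hp := hletter p (by rw [hlist]; exact List.mem_cons_self)
          have hhH : (w.head : G) ∈ H := (Subgroup.mem_inf.1 w.head.2).1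
          have hhZ : (w.head : G) ∈ Z := (Subgroup.mem_inf.1 w.head.2).2
          obtain ⟨b, g⟩ := p
          cases b
          · exact ⟨mul_mem hhZ hp.1, fun hmm => hp.2 ((mul_mem_cancel_left hhH).1 hmm)⟩
          · exact ⟨mul_mem hhH hp.1, fun hmm => hp.2 ((mul_mem_cancel_left hhZ).1 hmm)⟩
        · obtain ⟨q', hq', rfl⟩ := List.mem_map.1 hq
          exact hletter q' (by rw [hlist]; exact List.mem_cons_of_mem _ hq')
      have hprodG : ((lG.map Prod.snd).prod) = 1 := by
        have h2 := himg
        rw [hlist] at h2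
        simp only [List.map_cons, List.prod_cons] at h2
        rw [hlG]
        simp only [List.map_cons, List.prod_cons, List.map_map]
        rw [mul_assoc]
        exact h2
      exact pp_ne_one hindex hdisj hHne hZne hH hZ
        (rest.map (fun q => (q.1, ppVal H Z q.1 q.2)))
        (p.1, (w.head : G) * ppVal H Z p.1 p.2) hchainG hmemG hprodG
  · -- the range is `H ⊔ Z`
    refine le_antisymm ?_ ?_
    · rintro g ⟨x, rfl⟩
      show amalgamCanonicalHom H Z x ∈ H ⊔ Z
      induction x using Monoid.PushoutI.induction_on with
      | of b g' =>
        rw [hcan_of]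
        cases b
        · exact Subgroup.mem_sup_right g'.2
        · exact Subgroup.mem_sup_left g'.2
      | base h =>
        rw [hcan_base]
        exact Subgroup.mem_sup_left (Subgroup.mem_inf.1 h.2).1
      | mul x y ihx ihy =>
        erw [map_mul]
        exact mul_mem ihx ihy
    · rw [sup_le_iff]
      constructor
      · intro g hg
        exact ⟨Monoid.PushoutI.of true (⟨g, hg⟩ : ↥H), hcan_of true ⟨g, hg⟩⟩
      · intro g hg
        exact ⟨Monoid.PushoutI.of false (⟨g, hg⟩ : ↥Z), hcan_of false ⟨g, hg⟩⟩

end PingPong
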